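/- arXiv:1801.05753 — 7 statements merged into one kernel-verified Lean document; each statement's English description precedes it below -/
import Mathlib

section
/- Let n be a positive integer and let A be a real symmetric n×n matrix all of whose off-diagonal entries are non-positive (i.e. A i j ≤ 0 whenever i ≠ j). Then A is positive definite if and only if there exists a vector v ∈ ℝⁿ with all entries strictly positive such that the vector A·v also has all entries strictly positive. -/
open Matrix

/-- Criterion for positive definiteness: a real symmetric `n × n` matrix `A` with
non-positive off-diagonal entries is positive definite if and only if there exists a
vector `v` with all entries strictly positive such that `A * v` also has all entries
strictly positive. -/
theorem posDef_iff_exists_pos_mulVec_pos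
    (n : ℕ) (hn : 0 < n) (A : Matrix (Fin n) (Fin n) ℝ)
    (hsymm : A.IsSymm)
    (hoff : ∀ i j : Fin n, i ≠ j → A i j ≤ 0) :
    A.PosDef ↔ ∃ v : Fin n → ℝ, (∀ i, 0 < v i) ∧ ∀ i, 0 < (A *ᵥ v) i := by
  have hA : ∀ i j, A j i = A i j := by
    intro i j
    conv_lhs => rw [← hsymm]
    rfl
  constructor
  · -- forward direction
    intro hpd
    have hdet : IsUnit A.det := (Matrix.isUnit_iff_isUnit_det _).1 hpd.isUnit
    set v : Fin n → ℝ := A⁻¹ *ᵥ (fun _ => 1) with hv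
    have hAv : A *ᵥ v = fun _ => 1 := by
      rw [hv, mulVec_mulVec, mul_nonsing_inv _ hdet, one_mulVec]
    -- positive and negative parts
    set w : Fin n → ℝ := fun i => max (-(v i)) 0 with hw
    set p : Fin n → ℝ := fun i => max (v i) 0 with hp
    have hwp : ∀ i, v i = p i - w i := by
      intro i; simp [hw, hp, max_def]; split_ifs <;> linarith
    have hw0 : ∀ i, 0 ≤ w i := fun i => le_max_right _ _
    have hp0 : ∀ i, 0 ≤ p i := fun i => le_max_right _ _
    have hdisj : ∀ i, w i * p i = 0 := by
      intro i
      rcases le_or_gt (v i) 0 with h | h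
      · have : p i = 0 := by simp [hp, max_eq_right h]
        simp [this]
      · have : w i = 0 := by simp [hw, max_eq_right (by linarith : -(v i) ≤ 0)]
        simp [this]
    -- w ⬝ A v = sum of w ≥ 0
    have h1 : 0 ≤ w ⬝ᵥ (A *ᵥ v) := by
      rw [hAv]
      simp only [dotProduct]
      exact Finset.sum_nonneg fun i _ => by simpa using hw0 i
    -- w ⬝ A p ≤ 0
    have h2 : w ⬝ᵥ (A *ᵥ p) ≤ 0 := by
      simp only [dotProduct, mulVec, Finset.mul_sum]
      apply Finset.sum_nonpos
      intro i _
      apply Finset.sum_nonpos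
      intro j _
      rcases eq_or_ne i j with rfl | hij
      · have h : w i * (A i i * p i) = A i i * (w i * p i) := by ring
        rw [h, hdisj i, mul_zero]
      · nlinarith [hoff i j hij, mul_nonneg (hw0 i) (hp0 j)]
    -- w ⬝ A w ≤ 0
    have h3 : w ⬝ᵥ (A *ᵥ w) ≤ 0 := by
      have hsplit : w ⬝ᵥ (A *ᵥ v) = w ⬝ᵥ (A *ᵥ p) - w ⬝ᵥ (A *ᵥ w) := by
        have : v = p - w := funext fun i => by simpa using hwp i
        rw [this, mulVec_sub, dotProduct_sub]
      linarith
    -- so w = 0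
    have hwzero : w = 0 := by
      by_contra hne
      have := hpd.dotProduct_mulVec_pos hne
      simp only [star_trivial] at this
      linarith
    have hvnn : ∀ i, 0 ≤ v i := by
      intro i
      have h := congrFun hwzero i
      simp only [hw, Pi.zero_apply] at h
      have h2 : -(v i) ≤ max (-(v i)) 0 := le_max_left _ _
      rw [h] at h2
      linarith
    -- strict positivity
    have hvpos : ∀ i, 0 < v i := by
      intro i
      rcases (hvnn i).lt_or_eq with h | h
      · exact h
      · exfalso
        have hAvi : (A *ᵥ v) i = 1 := congrFun hAv i
        have : (A *ᵥ v) i ≤ 0 := by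
          simp only [mulVec, dotProduct]
          apply Finset.sum_nonpos
          intro j _
          rcases eq_or_ne i j with rfl | hij
          · rw [← h]; ring_nf; exact le_refl 0
          · exact mul_nonpos_of_nonpos_of_nonneg (hoff i j hij) (hvnn j)
        rw [hAvi] at this
        linarith
    exact ⟨v, hvpos, fun i => by rw [hAv]; norm_num⟩
  · -- reverse direction
    rintro ⟨v, hv, hAv⟩
    rw [posDef_iff_dotProduct_mulVec]
    constructor
    · ext i j
      simp only [Matrix.conjTranspose_apply, RCLike.star_def, starRingEnd_apply, star_trivial]
      exact hA i j
    intro x hx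
    simp only [star_trivial]
    set y : Fin n → ℝ := fun i => x i / v i with hy
    have hxy : ∀ i, x i = v i * y i := by
      intro i; rw [hy]; exact (mul_div_cancel₀ (x i) (hv i).ne').symm
    have key : x ⬝ᵥ (A *ᵥ x) =
        (∑ i, (y i)^2 * (v i * (A *ᵥ v) i))
          - (1/2) * ∑ i, ∑ j, A i j * v i * v j * (y i - y j)^2 := by
      have hswap : ∑ i, ∑ j, A i j * v i * v j * (y j)^2
          = ∑ i, ∑ j, A i j * v i * v j * (y i)^2 := by
        rw [Finset.sum_comm]
        apply Finset.sum_congr rfl; intro i _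
        apply Finset.sum_congr rfl; intro j _
        rw [hA j i]; ring
      have hlhs : x ⬝ᵥ (A *ᵥ x) = ∑ i, ∑ j, (v i * y i) * (A i j * (v j * y j)) := by
        simp only [dotProduct, mulVec, Finset.mul_sum]
        apply Finset.sum_congr rfl; intro i _
        apply Finset.sum_congr rfl; intro j _
        rw [hxy i, hxy j]
      rw [hlhs]
      have hrhs1 : ∑ i, (y i)^2 * (v i * (A *ᵥ v) i)
          = ∑ i, ∑ j, A i j * v i * v j * (y i)^2 := by
        simp only [mulVec, dotProduct, Finset.mul_sum]
        apply Finset.sum_congr rfl; intro i _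
        apply Finset.sum_congr rfl; intro j _
        ring
      rw [hrhs1]

      set S1 := ∑ i, ∑ j, A i j * v i * v j * (y i)^2 with hS1
      set L := ∑ i, ∑ j, (v i * y i) * (A i j * (v j * y j)) with hL
      have hQ : ∑ i, ∑ j, A i j * v i * v j * (y i - y j)^2 = 2*S1 - 2*L := by
        have step : ∑ i, ∑ j, A i j * v i * v j * (y i - y j)^2
            = (∑ i, ∑ j, A i j * v i * v j * (y i)^2)
              + (∑ i, ∑ j, A i j * v i * v j * (y j)^2)
              - 2 * ∑ i, ∑ j, (v i * y i) * (A i j * (v j * y j)) := by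
          rw [← Finset.sum_add_distrib, Finset.mul_sum, ← Finset.sum_sub_distrib]
          apply Finset.sum_congr rfl; intro i _
          rw [← Finset.sum_add_distrib, Finset.mul_sum, ← Finset.sum_sub_distrib]
          apply Finset.sum_congr rfl; intro j _
          ring
        rw [step, hswap, ← hS1, ← hL]; ring
      rw [hQ]; ring
    rw [key]
    have hQle : ∑ i, ∑ j, A i j * v i * v j * (y i - y j)^2 ≤ 0 := by
      apply Finset.sum_nonpos; intro i _
      apply Finset.sum_nonpos; intro j _
      rcases eq_or_ne i j with rfl | hij
      · simp
      · nlinarith [hoff i j hij,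
          mul_nonneg (mul_nonneg (hv i).le (hv j).le) (sq_nonneg (y i - y j))]
    have hSpos : 0 < ∑ i, (y i)^2 * (v i * (A *ᵥ v) i) := by
      obtain ⟨i0, hi0⟩ : ∃ i, x i ≠ 0 := by
        by_contra h
        push_neg at h
        exact hx (funext h)
      apply Finset.sum_pos'
      · intro i _
        have := (hv i).le
        have := (hAv i).le
        positivity
      · refine ⟨i0, Finset.mem_univ _, ?_⟩
        have hyi : y i0 ≠ 0 := by
          rw [hy]
          exact div_ne_zero hi0 (hv i0).ne'
        have := hv i0
        have := hAv i0
        positivity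
    linarith
end

section
/- Let n be a positive integer and let A be a real symmetric n×n matrix all of whose off-diagonal entries are non-negative (i.e. A i j ≥ 0 whenever i ≠ j). Then A is negative definite if and only if there exists a vector v ∈ ℝⁿ with all entries strictly positive such that the vector A·v has all entries strictly negative. -/
open Matrix

/-- Criterion for negative definiteness: a real symmetric `n × n` matrix `A` with
non-negative off-diagonal entries is negative definite (i.e. `vᵀ A v < 0` for every
nonzero `v`) if and only if there is a vector `v` with all entries strictly positive
such that `A * v` has all entries strictly negative. -/
theorem negDef_iff_exists_pos_mulVec_neg
    (n : ℕ) (hn : 0 < n) (A : Matrix (Fin n) (Fin n) ℝ)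
    (hsymm : A.IsSymm)
    (hoff : ∀ i j : Fin n, i ≠ j → 0 ≤ A i j) :
    (∀ v : Fin n → ℝ, v ≠ 0 → v ⬝ᵥ (A *ᵥ v) < 0) ↔
      ∃ v : Fin n → ℝ, (∀ i, 0 < v i) ∧ ∀ i, (A *ᵥ v) i < 0 := by
  constructor
  · intro hneg
    -- A is invertible as a linear map
    have hinj : Function.Injective (Matrix.toLin' A) := by
      rw [injective_iff_map_eq_zero]
      intro x hx
      by_contra hx0
      have := hneg x hx0
      rw [show A *ᵥ x = 0 from by simpa [Matrix.toLin'_apply] using hx] at this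
      simp at this
    have hsurj : Function.Surjective (Matrix.toLin' A) :=
      (LinearMap.injective_iff_surjective).mp hinj
    obtain ⟨v, hv⟩ := hsurj (fun _ => -1)
    have hAv : A *ᵥ v = fun _ => -1 := by simpa [Matrix.toLin'_apply] using hv
    -- positive and negative parts
    set p : Fin n → ℝ := fun i => max (v i) 0 with hp
    set m : Fin n → ℝ := fun i => max (-v i) 0 with hm
    have hpm : ∀ i, p i - m i = v i := by
      intro i
      rcases le_total (v i) 0 with h | h
      · simp [hp, hm, max_eq_right h, max_eq_left (neg_nonneg.mpr h)]
      · simp [hp, hm, max_eq_left h, max_eq_right (neg_nonpos.mpr h)]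
    have hpm0 : ∀ i, p i * m i = 0 := by
      intro i
      rcases le_total (v i) 0 with h | h
      · simp [hp, max_eq_right h]
      · simp [hm, max_eq_right (neg_nonpos.mpr h)]
    have hpge : ∀ i, 0 ≤ p i := fun i => le_max_right _ _
    have hmge : ∀ i, 0 ≤ m i := fun i => le_max_right _ _
    -- m = 0
    have hm0 : m = 0 := by
      by_contra hm0
      have h1 : m ⬝ᵥ (A *ᵥ v) ≤ 0 := by
        rw [hAv]
        simp only [dotProduct]
        apply Finset.sum_nonpos
        intro i _
        have := hmge i
        nlinarith
      have hvpm : v = p - m := by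
        funext i; simp [hpm i]
      have h2 : 0 ≤ m ⬝ᵥ (A *ᵥ p) := by
        simp only [dotProduct, Matrix.mulVec, dotProduct]
        apply Finset.sum_nonneg
        intro i _
        rw [Finset.mul_sum]
        apply Finset.sum_nonneg
        intro j _
        rcases eq_or_ne i j with rfl | hij
        · have e : m i * (A i i * p i) = A i i * (p i * m i) := by ring
          rw [e, hpm0 i, mul_zero]
        · have := hoff i j hij
          have := hmge i
          have := hpge j
          positivity
      have h3 : m ⬝ᵥ (A *ᵥ m) < 0 := hneg m hm0
      rw [hvpm, Matrix.mulVec_sub, dotProduct_sub] at h1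
      linarith
    have hvpos : ∀ i, 0 ≤ v i := by
      intro i
      have : m i = 0 := by rw [hm0]; rfl
      simp only [hm] at this
      by_contra h
      push_neg at h
      rw [max_eq_left (by linarith)] at this
      linarith
    refine ⟨v, ?_, ?_⟩
    · intro i
      rcases (hvpos i).lt_or_eq with h | h
      · exact h
      · exfalso
        have hAvi : (A *ᵥ v) i = -1 := by rw [hAv]
        have : 0 ≤ (A *ᵥ v) i := by
          simp only [Matrix.mulVec, dotProduct]
          apply Finset.sum_nonneg
          intro j _
          rcases eq_or_ne j i with rfl | hij
          · rw [← h]; ring_nf; simp [← h]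
          · exact mul_nonneg (hoff i j (Ne.symm hij)) (hvpos j)
        rw [hAvi] at this; linarith
    · intro i; rw [hAv]; norm_num
  · rintro ⟨v, hvpos, hAv⟩ x hx
    -- key bound: x ⬝ᵥ (A *ᵥ x) ≤ ∑ i, (x i)^2 / v i * (A *ᵥ v) i
    have key : x ⬝ᵥ (A *ᵥ x) ≤ ∑ i, (x i)^2 / v i * (A *ᵥ v) i := by
      simp only [dotProduct, Matrix.mulVec, dotProduct, Finset.mul_sum]
      have step1 : ∀ i j : Fin n,
          2 * (x i * (A i j * x j)) ≤ A i j * ((x i)^2 * v j / v i) + A i j * ((x j)^2 * v i / v j) := by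
        intro i j
        have hvi := hvpos i
        have hvj := hvpos j
        rcases eq_or_ne i j with rfl | hij
        · have h0 : v i ≠ 0 := hvi.ne'
          apply le_of_eq
          field_simp
          ring
        · have hA := hoff i j hij
          have amgm : 2 * (x i * x j) ≤ (x i)^2 * v j / v i + (x j)^2 * v i / v j := by
            rw [div_add_div _ _ hvi.ne' hvj.ne', le_div_iff₀ (mul_pos hvi hvj)]
            nlinarith [sq_nonneg (x i * v j - x j * v i)]
          nlinarith [mul_le_mul_of_nonneg_left amgm hA]
      have sumstep : 2 * (∑ i, ∑ j, x i * (A i j * x j)) ≤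
          (∑ i, ∑ j, A i j * ((x i)^2 * v j / v i)) + ∑ i, ∑ j, A i j * ((x j)^2 * v i / v j) := by
        rw [Finset.mul_sum, ← Finset.sum_add_distrib]
        apply Finset.sum_le_sum; intro i _
        rw [Finset.mul_sum, ← Finset.sum_add_distrib]
        apply Finset.sum_le_sum; intro j _
        exact step1 i j
      have hswap : ∑ i, ∑ j, A i j * ((x j)^2 * v i / v j)
          = ∑ i, ∑ j, A i j * ((x i)^2 * v j / v i) := by
        rw [Finset.sum_comm]
        apply Finset.sum_congr rfl; intro j _
        apply Finset.sum_congr rfl; intro i _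
        have hAij : A i j = A j i := by
          have h := hsymm
          rw [Matrix.IsSymm] at h
          calc A i j = Aᵀ j i := rfl
            _ = A j i := by rw [h]
        rw [hAij]
      have hT : ∑ i, ∑ j, A i j * ((x i)^2 * v j / v i)
          = ∑ i, ∑ j, (x i)^2 / v i * (A i j * v j) := by
        apply Finset.sum_congr rfl; intro i _
        apply Finset.sum_congr rfl; intro j _
        have h0 : v i ≠ 0 := (hvpos i).ne'
        field_simp
      rw [hswap] at sumstep
      rw [← hT]
      linarith
    -- the RHS is negative
    have hex : ∃ i, x i ≠ 0 := by
      by_contra h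
      push_neg at h
      exact hx (funext h)
    obtain ⟨i₀, hi₀⟩ := hex
    have hlt : ∑ i, (x i)^2 / v i * (A *ᵥ v) i < 0 := by
      have : ∑ i, (x i)^2 / v i * (A *ᵥ v) i < ∑ _i : Fin n, (0:ℝ) := by
        apply Finset.sum_lt_sum
        · intro i _
          have hvi := hvpos i
          have h1 : 0 ≤ (x i)^2 / v i := by positivity
          have h2 := hAv i
          nlinarith
        · refine ⟨i₀, Finset.mem_univ _, ?_⟩
          have hvi := hvpos i₀
          have h1 : 0 < (x i₀)^2 / v i₀ :=
            div_pos (pow_two_pos_of_ne_zero hi₀) hvi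
          have h2 := hAv i₀
          nlinarith
      simpa using this
    linarith
end

section
/- Let A be a real symmetric positive definite n×n matrix all of whose off-diagonal entries are non-positive (i.e. A i j ≤ 0 whenever i ≠ j). Then A is invertible and every entry of the inverse matrix A⁻¹ is non-negative. -/
/-- A real symmetric positive definite matrix with non-positive off-diagonal entries
is invertible and its inverse has non-negative entries. -/
theorem posDef_offDiag_nonpos_inv_nonneg
    (n : ℕ) (A : Matrix (Fin n) (Fin n) ℝ)
    (hsymm : A.IsSymm) (hpos : A.PosDef)
    (hoff : ∀ i j : Fin n, i ≠ j → A i j ≤ 0) :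
    IsUnit A ∧ ∀ i j : Fin n, 0 ≤ A⁻¹ i j := by
  have hdet : IsUnit A.det := isUnit_iff_ne_zero.2 hpos.det_pos.ne'
  refine ⟨(Matrix.isUnit_iff_isUnit_det A).2 hdet, ?_⟩
  intro i0 j
  set x : Fin n → ℝ := fun k => A⁻¹ k j with hx
  have hAx : ∀ i, A.mulVec x i = if i = j then 1 else 0 := by
    intro i
    have h1 : A * A⁻¹ = 1 := Matrix.mul_nonsing_inv A hdet
    calc A.mulVec x i = (A * A⁻¹) i j := by
          simp [Matrix.mulVec, Matrix.mul_apply, dotProduct, hx]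
      _ = (1 : Matrix (Fin n) (Fin n) ℝ) i j := by rw [h1]
      _ = if i = j then 1 else 0 := Matrix.one_apply
  set v : Fin n → ℝ := fun k => max (-(x k)) 0 with hv
  set u : Fin n → ℝ := fun k => max (x k) 0 with hu
  have hvnn : ∀ k, 0 ≤ v k := fun k => le_max_right _ _
  have hunn : ∀ k, 0 ≤ u k := fun k => le_max_right _ _
  have hxuv : ∀ k, x k = u k - v k := by
    intro k
    rcases le_total (x k) 0 with h | h
    · simp [hu, hv, max_eq_right h, max_eq_left (by linarith : (0:ℝ) ≤ -x k)]
    · simp [hu, hv, max_eq_left h, max_eq_right (by linarith : -x k ≤ (0:ℝ))]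
  have hdisj : ∀ k, v k ≠ 0 → u k = 0 := by
    intro k hk
    have hvk : 0 < v k := lt_of_le_of_ne (hvnn k) (Ne.symm hk)
    have : x k < 0 := by
      by_contra h
      push_neg at h
      have : v k = 0 := max_eq_right (by linarith)
      exact hk this
    exact max_eq_right this.le
  -- v ⬝ A u ≤ 0
  have hvAu : dotProduct v (A.mulVec u) ≤ 0 := by
    apply Finset.sum_nonpos
    intro i _
    simp only [Matrix.mulVec, dotProduct]
    rcases eq_or_ne (v i) 0 with h | h
    · simp [h]
    · have hui : u i = 0 := hdisj i h
      apply mul_nonpos_of_nonneg_of_nonpos (hvnn i)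
      apply Finset.sum_nonpos
      intro k _
      rcases eq_or_ne k i with hk | hk
      · simp [hk, hui]
      · exact mul_nonpos_of_nonpos_of_nonneg (hoff i k (Ne.symm hk)) (hunn k)
  -- v ⬝ A x = v j ≥ 0
  have hvAx : dotProduct v (A.mulVec x) = v j := by
    simp only [dotProduct]
    rw [Finset.sum_eq_single j]
    · rw [hAx j]; simp
    · intro b _ hb; rw [hAx b]; simp [hb]
    · intro h; exact absurd (Finset.mem_univ j) h
  have hmul : A.mulVec x = A.mulVec u - A.mulVec v := by
    have huv : x = u - v := funext fun k => by rw [Pi.sub_apply]; exact hxuv k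
    rw [huv, Matrix.mulVec_sub]
  have hvAv : dotProduct v (A.mulVec v) ≤ 0 := by
    have h1 : dotProduct v (A.mulVec v)
        = dotProduct v (A.mulVec u) - dotProduct v (A.mulVec x) := by
      rw [hmul, dotProduct_sub]; ring
    rw [h1, hvAx]
    have := hvnn j
    linarith
  have hv0 : v = 0 := by
    by_contra hne
    have h2 : 0 < dotProduct v (A.mulVec v) := hpos.dotProduct_mulVec_pos hne
    linarith
  have : v i0 = 0 := by rw [hv0]; rfl
  have hxnn : 0 ≤ x i0 := by rw [hxuv i0]; linarith [hunn i0]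
  exact hxnn
end

section
/- Let L be a real lower-triangular n×n matrix whose diagonal entries are all strictly positive. If the symmetric matrix A = L·Lᵀ has all off-diagonal entries non-positive (i.e. A i j ≤ 0 whenever i ≠ j), then all off-diagonal entries of L are non-positive (i.e. L i j ≤ 0 whenever i ≠ j). -/
open Matrix

/-- If `L` is a real lower-triangular matrix with strictly positive diagonal entries
and the symmetric matrix `A = L * Lᵀ` has all off-diagonal entries non-positive, then
all off-diagonal entries of `L` are non-positive. -/
theorem cholesky_factor_offDiag_nonpos
    (n : ℕ) (L : Matrix (Fin n) (Fin n) ℝ)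
    (hlow : ∀ i j : Fin n, i < j → L i j = 0)
    (hdiag : ∀ i : Fin n, 0 < L i i)
    (hA : ∀ i j : Fin n, i ≠ j → (L * Lᵀ) i j ≤ 0) :
    ∀ i j : Fin n, i ≠ j → L i j ≤ 0 := by
  suffices H : ∀ m : ℕ, ∀ j : Fin n, j.val = m → ∀ i : Fin n, i ≠ j → L i j ≤ 0 by
    intro i j hij; exact H j.val j rfl i hij
  intro m
  induction m using Nat.strong_induction_on with
  | _ m ih =>
    intro j hj i hij
    rcases lt_trichotomy i j with h | h | h
    · rw [hlow i j h]
    · exact absurd h hij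
    · have hAij := hA i j hij
      have hsum : (L * Lᵀ) i j = L i j * L j j + ∑ k ∈ Finset.univ.erase j, L i k * L j k := by
        rw [Matrix.mul_apply]
        simp only [Matrix.transpose_apply]
        exact (Finset.add_sum_erase Finset.univ (fun k => L i k * L j k)
          (Finset.mem_univ j)).symm
      have hnn : 0 ≤ ∑ k ∈ Finset.univ.erase j, L i k * L j k := by
        apply Finset.sum_nonneg
        intro k hk
        have hkj : k ≠ j := Finset.ne_of_mem_erase hk
        rcases lt_or_gt_of_ne hkj with hk1 | hk1
        · have hik : i ≠ k := by
            intro he; exact absurd (he ▸ hk1) (not_lt.mpr h.le)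
          have h1 : L i k ≤ 0 := ih k.val (hj ▸ hk1) k rfl i hik
          have h2 : L j k ≤ 0 := ih k.val (hj ▸ hk1) k rfl j hkj.symm
          exact mul_nonneg_of_nonpos_of_nonpos h1 h2
        · rw [hlow j k hk1, mul_zero]
      have hprod : L i j * L j j ≤ 0 := by
        rw [hsum] at hAij; linarith
      nlinarith [hdiag j]
end

section
/- Let L be a real lower-triangular n×n matrix whose diagonal entries are all strictly positive and whose off-diagonal entries are all non-positive (i.e. L i j ≤ 0 whenever i ≠ j). Then L is invertible and every entry of L⁻¹ is non-negative. -/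
/-- A real lower-triangular matrix with strictly positive diagonal entries and
non-positive off-diagonal entries is invertible and its inverse has non-negative
entries. -/
theorem lowerTriangular_offDiag_nonpos_inv_nonneg
    (n : ℕ) (L : Matrix (Fin n) (Fin n) ℝ)
    (hlow : ∀ i j : Fin n, i < j → L i j = 0)
    (hdiag : ∀ i : Fin n, 0 < L i i)
    (hoff : ∀ i j : Fin n, i ≠ j → L i j ≤ 0) :
    IsUnit L ∧ ∀ i j : Fin n, 0 ≤ L⁻¹ i j := by
  have hdet : L.det = ∏ i, L i i := by
    apply Matrix.det_of_lowerTriangular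
    intro i j h
    exact hlow i j h
  have hdetpos : 0 < L.det := hdet ▸ Finset.prod_pos (fun i _ => hdiag i)
  have hdet0 : L.det ≠ 0 := ne_of_gt hdetpos
  have hUnit : IsUnit L := (Matrix.isUnit_iff_isUnit_det L).mpr (isUnit_iff_ne_zero.mpr hdet0)
  refine ⟨hUnit, ?_⟩
  have h1 : L * L⁻¹ = 1 := Matrix.mul_nonsing_inv L (isUnit_iff_ne_zero.mpr hdet0)
  set A := L⁻¹ with hA
  intro i j
  induction i using WellFounded.induction (wellFounded_lt (α := Fin n)) with
  | _ i ih =>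
    have heq : ∑ k, L i k * A k j = (1 : Matrix (Fin n) (Fin n) ℝ) i j := by
      rw [← Matrix.mul_apply, h1]
    have hsplit : ∑ k, L i k * A k j
        = L i i * A i j + ∑ k ∈ Finset.univ.erase i, L i k * A k j :=
      (Finset.add_sum_erase _ _ (Finset.mem_univ i)).symm
    have hrest : ∑ k ∈ Finset.univ.erase i, L i k * A k j ≤ 0 := by
      apply Finset.sum_nonpos
      intro k hk
      have hki : k ≠ i := Finset.ne_of_mem_erase hk
      rcases lt_or_gt_of_ne hki with h | h
      · exact mul_nonpos_of_nonpos_of_nonneg (hoff i k hki.symm) (ih k h)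
      · rw [hlow i k h, zero_mul]
    have hone : 0 ≤ (1 : Matrix (Fin n) (Fin n) ℝ) i j := by
      rw [Matrix.one_apply]; positivity
    have : 0 ≤ L i i * A i j := by
      have := hsplit ▸ heq
      linarith
    exact nonneg_of_mul_nonneg_right this (hdiag i)
end

section
/- Let A be a real n×n matrix that is strictly diagonally dominant with strictly positive diagonal entries, i.e. for every index i one has A i i > ∑_{j ≠ i} |A i j| (in particular A i i > 0). Then det A > 0. -/
/-- A real square matrix that is strictly diagonally dominant (with strictly positive
diagonal entries) has positive determinant. -/
theorem det_pos_of_strictly_diagonally_dominant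
    (n : ℕ) (A : Matrix (Fin n) (Fin n) ℝ)
    (hdom : ∀ i : Fin n, ∑ j ∈ Finset.univ.erase i, |A i j| < A i i) :
    0 < A.det := by
  -- homotopy: scale off-diagonal entries by t
  set M : ℝ → Matrix (Fin n) (Fin n) ℝ :=
    fun t => Matrix.of fun i j => if i = j then A i i else t * A i j with hM
  have hdiagpos : ∀ i, 0 < A i i := fun i =>
    lt_of_le_of_lt (Finset.sum_nonneg fun j _ => abs_nonneg _) (hdom i)
  have hne : ∀ t ∈ Set.Icc (0:ℝ) 1, (M t).det ≠ 0 := by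
    intro t ht
    apply det_ne_zero_of_sum_row_lt_diag
    intro k
    have : ∑ j ∈ Finset.univ.erase k, ‖M t k j‖ ≤ ∑ j ∈ Finset.univ.erase k, |A k j| := by
      apply Finset.sum_le_sum
      intro j hj
      have hjk : j ≠ k := Finset.ne_of_mem_erase hj
      simp only [hM, Matrix.of_apply, if_neg (Ne.symm hjk), Real.norm_eq_abs, abs_mul]
      calc |t| * |A k j| ≤ 1 * |A k j| := by
            apply mul_le_mul_of_nonneg_right _ (abs_nonneg _)
            rw [abs_le]; exact ⟨le_trans (by norm_num) ht.1, ht.2⟩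
        _ = |A k j| := one_mul _
    refine lt_of_le_of_lt this ?_
    simpa [hM, Real.norm_eq_abs, abs_of_pos (hdiagpos k)] using hdom k
  have hcont : ContinuousOn (fun t => (M t).det) (Set.Icc (0:ℝ) 1) := by
    apply Continuous.continuousOn
    apply Continuous.matrix_det
    apply continuous_matrix
    intro i j
    by_cases h : i = j <;> simp [hM, h] <;> fun_prop
  have hM0 : (M 0).det = ∏ i, A i i := by
    have : M 0 = Matrix.diagonal (fun i => A i i) := by
      ext i j
      by_cases h : i = j <;> simp [hM, Matrix.diagonal, h]
    rw [this, Matrix.det_diagonal]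
  have h0pos : 0 < (M 0).det := by
    rw [hM0]; exact Finset.prod_pos fun i _ => hdiagpos i
  have hA : A = M 1 := by
    ext i j; by_cases h : i = j <;> simp [hM, h]
  rw [hA]
  by_contra hle
  push_neg at hle
  have h1 : (M 1).det ≠ 0 := hne 1 (by norm_num)
  have hneg : (M 1).det < 0 := lt_of_le_of_ne hle h1
  -- IVT: there is t with det (M t) = 0
  have : (0:ℝ) ∈ Set.Icc ((M 1).det) ((M 0).det) := ⟨le_of_lt hneg, le_of_lt h0pos⟩
  obtain ⟨t, ht, hval⟩ := intermediate_value_Icc' (by norm_num : (0:ℝ) ≤ 1) hcont this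
  exact hne t ht hval
end

section
/- Let A be a real n×n matrix all of whose off-diagonal entries are non-positive (i.e. A i j ≤ 0 whenever i ≠ j) and all of whose row sums are strictly positive (i.e. ∑_j A i j > 0 for every i). Then A is strictly diagonally dominant with strictly positive diagonal entries, and det A > 0. -/
/-- A real square matrix with non-positive off-diagonal entries and strictly positive
row sums is strictly diagonally dominant with strictly positive diagonal entries, and
has positive determinant. -/
theorem det_pos_of_offDiag_nonpos_rowSums_pos
    (n : ℕ) (A : Matrix (Fin n) (Fin n) ℝ)
    (hoff : ∀ i j : Fin n, i ≠ j → A i j ≤ 0)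
    (hrow : ∀ i : Fin n, 0 < ∑ j, A i j) :
    (∀ i : Fin n, ∑ j ∈ Finset.univ.erase i, |A i j| < A i i) ∧
      (∀ i : Fin n, 0 < A i i) ∧ 0 < A.det := by
  have hdom : ∀ i : Fin n, ∑ j ∈ Finset.univ.erase i, |A i j| < A i i := by
    intro i
    have habs : ∀ j ∈ Finset.univ.erase i, |A i j| = -A i j := by
      intro j hj
      exact abs_of_nonpos (hoff i j (Finset.ne_of_mem_erase hj).symm)
    rw [Finset.sum_congr rfl habs, Finset.sum_neg_distrib]
    have := hrow i
    have hsplit : ∑ j, A i j = A i i + ∑ j ∈ Finset.univ.erase i, A i j :=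
      (Finset.add_sum_erase _ _ (Finset.mem_univ i)).symm
    linarith [hsplit ▸ this]
  have hdiag : ∀ i : Fin n, 0 < A i i := by
    intro i
    have := hdom i
    have h0 : (0:ℝ) ≤ ∑ j ∈ Finset.univ.erase i, |A i j| :=
      Finset.sum_nonneg fun j _ => abs_nonneg _
    linarith
  refine ⟨hdom, hdiag, ?_⟩
  -- homotopy
  set M : ℝ → Matrix (Fin n) (Fin n) ℝ :=
    fun t => Matrix.of fun i j => if i = j then A i i else t * A i j with hM
  have hcont : Continuous fun t => (M t).det := by
    apply Continuous.matrix_det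
    apply continuous_matrix
    intro i j
    by_cases h : i = j <;> simp [hM, h] <;> fun_prop
  have hne : ∀ t ∈ Set.Icc (0:ℝ) 1, (M t).det ≠ 0 := by
    intro t ht
    apply det_ne_zero_of_sum_row_lt_diag
    intro k
    have : ∑ j ∈ Finset.univ.erase k, ‖M t k j‖ ≤ ∑ j ∈ Finset.univ.erase k, |A k j| := by
      apply Finset.sum_le_sum
      intro j hj
      have hjk : ¬ k = j := fun h => (Finset.ne_of_mem_erase hj) h.symm
      simp only [hM, Matrix.of_apply, if_neg hjk, Real.norm_eq_abs, abs_mul]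
      calc |t| * |A k j| ≤ 1 * |A k j| := by
            apply mul_le_mul_of_nonneg_right _ (abs_nonneg _)
            rw [abs_le]; exact ⟨by linarith [ht.1], ht.2⟩
        _ = |A k j| := one_mul _
    have hkk : ‖M t k k‖ = A k k := by
      simp [hM, Real.norm_eq_abs, abs_of_pos (hdiag k)]
    rw [hkk]
    exact lt_of_le_of_lt this (hdom k)
  have h0 : (M 0).det = ∏ i, A i i := by
    have : M 0 = Matrix.diagonal fun i => A i i := by
      ext i j
      by_cases h : i = j <;> simp [hM, Matrix.diagonal, h]
    rw [this, Matrix.det_diagonal]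
  have h0pos : 0 < (M 0).det := by
    rw [h0]; exact Finset.prod_pos fun i _ => hdiag i
  have hM1 : M 1 = A := by
    ext i j; by_cases h : i = j <;> simp [hM, h]
  by_contra hle
  push_neg at hle
  have h1neg : (M 1).det < 0 := by
    rw [hM1]
    exact lt_of_le_of_ne hle (hne 1 ⟨zero_le_one, le_refl 1⟩ ∘ (hM1 ▸ ·))
  obtain ⟨t, ht, hzero⟩ := intermediate_value_Icc' zero_le_one hcont.continuousOn
    (Set.mem_Icc.mpr ⟨le_of_lt h1neg, le_of_lt h0pos⟩)
  exact hne t ht hzero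
end
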